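/- (Appendix D: the delta-method variance of the ATT estimator equals the semiparametric efficiency bound.) Let X be a random element of a measurable space 𝒳 on a probability space (Ω, P), and let e: 𝒳 → ℝ be measurable with ε₀ ≤ e(X) ≤ 1 − ε₀ almost surely for some ε₀ ∈ (0, 1/2). Let β: 𝒳 → ℝ with E[β(X)²] < ∞ and let s₁, s₀: 𝒳 → [0, ∞) be measurable with E[s₁(X)] < ∞ and E[s₀(X)] < ∞. Set p := E[e(X)] (so p ∈ (0, 1)), ψ := E[β(X)·e(X)], τ := ψ/p, σ_ψ² := E[ e(X)·s₁(X) + e(X)²·s₀(X)/(1 − e(X)) + β(X)²·e(X) ] − ψ², σ_p² := p·(1 − p), σ_{ψp} := E[β(X)·e(X)·(1 − p)], and V := σ_ψ²/p² + ψ²·σ_p²/p⁴ − 2·ψ·σ_{ψp}/p³. Then V = E[ e(X)·s₁(X)/p² + e(X)²·s₀(X)/(p²·(1 − e(X))) + e(X)·(β(X) − τ)²/p² ]. -/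

import Mathlib

open MeasureTheory

lemma att_pointwise_aux (p τ E S1 S0 B : ℝ) (hp : p ≠ 0) (hd : (1:ℝ) - E ≠ 0) :
    E * S1 / p ^ 2 + E ^ 2 * S0 / (p ^ 2 * (1 - E)) + E * (B - τ) ^ 2 / p ^ 2
    = (p ^ 2)⁻¹ * (E * S1 + E ^ 2 * S0 / (1 - E) + B ^ 2 * E + (-(2 * τ)) * (B * E) +
        (τ ^ 2) * E) := by
  field_simp
  ring

lemma att_algebra_aux (p ψ I1 I2 I3 : ℝ) (hp : p ≠ 0) :
    (I1 + I2 + I3 - ψ ^ 2) / p ^ 2 + ψ ^ 2 * (p * (1 - p)) / p ^ 4 -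
      2 * ψ * (ψ * (1 - p)) / p ^ 3
    = (p ^ 2)⁻¹ * (I1 + I2 + I3 + (-(2 * (ψ / p))) * ψ + (ψ / p) ^ 2 * p) := by
  field_simp
  ring

/-- Appendix D: the delta-method variance of the ATT estimator equals the
semiparametric efficiency bound:
`V = σ_ψ²/p² + ψ²σ_p²/p⁴ − 2ψσ_{ψp}/p³
   = E[e(X)s₁(X)/p² + e(X)²s₀(X)/(p²(1−e(X))) + e(X)(β(X) − τ)²/p²]`. -/
theorem att_delta_method_variance_equals_bound
    {Ω 𝒳 : Type*} [MeasurableSpace Ω] [MeasurableSpace 𝒳]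
    (P : Measure Ω) [IsProbabilityMeasure P]
    (X : Ω → 𝒳) (hX : Measurable X)
    (e : 𝒳 → ℝ) (hemeas : Measurable e)
    (ε₀ : ℝ) (hε₀ : ε₀ ∈ Set.Ioo (0 : ℝ) (1 / 2))
    (hebound : ∀ᵐ ω ∂P, ε₀ ≤ e (X ω) ∧ e (X ω) ≤ 1 - ε₀)
    (β : 𝒳 → ℝ) (hβmeas : Measurable β) (hβL2 : MemLp (fun ω => β (X ω)) 2 P)
    (s₁ s₀ : 𝒳 → ℝ) (hs₁meas : Measurable s₁) (hs₀meas : Measurable s₀)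
    (hs₁nonneg : ∀ x, 0 ≤ s₁ x) (hs₀nonneg : ∀ x, 0 ≤ s₀ x)
    (hs₁int : Integrable (fun ω => s₁ (X ω)) P)
    (hs₀int : Integrable (fun ω => s₀ (X ω)) P)
    (p ψ τ σψ2 σp2 σψp V : ℝ)
    (hp : p = ∫ ω, e (X ω) ∂P)
    (hψ : ψ = ∫ ω, β (X ω) * e (X ω) ∂P)
    (hτ : τ = ψ / p)
    (hσψ2 : σψ2 = (∫ ω, (e (X ω) * s₁ (X ω) + e (X ω) ^ 2 * s₀ (X ω) / (1 - e (X ω)) +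
      β (X ω) ^ 2 * e (X ω)) ∂P) - ψ ^ 2)
    (hσp2 : σp2 = p * (1 - p))
    (hσψp : σψp = ∫ ω, β (X ω) * e (X ω) * (1 - p) ∂P)
    (hV : V = σψ2 / p ^ 2 + ψ ^ 2 * σp2 / p ^ 4 - 2 * ψ * σψp / p ^ 3) :
    V = ∫ ω, (e (X ω) * s₁ (X ω) / p ^ 2 +
      e (X ω) ^ 2 * s₀ (X ω) / (p ^ 2 * (1 - e (X ω))) +
      e (X ω) * (β (X ω) - τ) ^ 2 / p ^ 2) ∂P := by

  have hε : (0:ℝ) < ε₀ := hε₀.1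
  have hem : AEStronglyMeasurable (fun ω => e (X ω)) P :=
    (hemeas.comp hX).aestronglyMeasurable
  have hae1 : ∀ᵐ ω ∂P, ‖e (X ω)‖ ≤ 1 := by
    filter_upwards [hebound] with ω h
    rw [Real.norm_eq_abs, abs_le]
    constructor <;> nlinarith [hε₀.2, h.1, h.2]
  have hIe : Integrable (fun ω => e (X ω)) P :=
    (integrable_const 1).mono' hem hae1
  have hβint : Integrable (fun ω => β (X ω)) P := hβL2.integrable one_le_two
  have hβ2int : Integrable (fun ω => β (X ω) ^ 2) P := by
    have := hβL2.integrable_sq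
    simpa [sq] using this
  have hI1 : Integrable (fun ω => e (X ω) * s₁ (X ω)) P := by
    refine hs₁int.mono' (hem.mul ((hs₁meas.comp hX).aestronglyMeasurable)) ?_
    filter_upwards [hebound] with ω h
    have h0 := hs₁nonneg (X ω)
    rw [Real.norm_eq_abs, abs_mul]
    have he1 : |e (X ω)| ≤ 1 := by rw [abs_le]; constructor <;> nlinarith [hε₀.2]
    calc |e (X ω)| * |s₁ (X ω)| ≤ 1 * |s₁ (X ω)| :=
          mul_le_mul_of_nonneg_right he1 (abs_nonneg _)
      _ = s₁ (X ω) := by rw [one_mul, abs_of_nonneg h0]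
  have hI2 : Integrable (fun ω => e (X ω) ^ 2 * s₀ (X ω) / (1 - e (X ω))) P := by
    refine (hs₀int.div_const ε₀).mono'
      ((((hemeas.pow_const 2).mul hs₀meas).div ((measurable_const.sub hemeas))).comp hX).aestronglyMeasurable ?_
    filter_upwards [hebound] with ω h
    have h0 := hs₀nonneg (X ω)
    have he0 : (0:ℝ) ≤ e (X ω) := le_trans hε.le h.1
    have he1 : e (X ω) ≤ 1 := by linarith [h.2]
    have h1 : (0:ℝ) < 1 - e (X ω) := by nlinarith [hε₀.2]
    have hnn : 0 ≤ e (X ω) ^ 2 * s₀ (X ω) / (1 - e (X ω)) := by positivity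
    rw [Real.norm_eq_abs, abs_of_nonneg hnn]
    have hsq : e (X ω) ^ 2 ≤ 1 := by nlinarith
    have hnum : e (X ω) ^ 2 * s₀ (X ω) ≤ s₀ (X ω) := by nlinarith
    have hden : ε₀ ≤ 1 - e (X ω) := by linarith [h.2]
    exact div_le_div₀ (by positivity) hnum hε hden
  have hI3 : Integrable (fun ω => β (X ω) ^ 2 * e (X ω)) P := by
    refine hβ2int.mono' (((hβmeas.pow_const 2).mul hemeas).comp hX).aestronglyMeasurable ?_
    filter_upwards [hebound] with ω h
    rw [Real.norm_eq_abs, abs_mul]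
    have he1 : |e (X ω)| ≤ 1 := by rw [abs_le]; constructor <;> nlinarith [hε₀.2]
    calc |β (X ω) ^ 2| * |e (X ω)| ≤ |β (X ω) ^ 2| * 1 :=
          mul_le_mul_of_nonneg_left he1 (abs_nonneg _)
      _ = β (X ω) ^ 2 := by rw [mul_one, abs_of_nonneg (sq_nonneg _)]
  have hβm : AEStronglyMeasurable (fun ω => β (X ω)) P :=
    (hβmeas.comp hX).aestronglyMeasurable
  have hI4 : Integrable (fun ω => β (X ω) * e (X ω)) P := by
    refine hβint.abs.mono' (hβm.mul hem) ?_
    filter_upwards [hebound] with ω h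
    rw [Real.norm_eq_abs, abs_mul]
    have he1 : |e (X ω)| ≤ 1 := by rw [abs_le]; constructor <;> nlinarith [hε₀.2]
    calc |β (X ω)| * |e (X ω)| ≤ |β (X ω)| * 1 :=
          mul_le_mul_of_nonneg_left he1 (abs_nonneg _)
      _ = |β (X ω)| := by rw [mul_one]
  have hp0 : 0 < p := by
    have hle : ε₀ ≤ ∫ ω, e (X ω) ∂P := by
      have := integral_mono_ae (integrable_const ε₀) hIe (hebound.mono fun ω h => h.1)
      simpa using this
    rw [hp]; linarith
  have hσψp' : σψp = ψ * (1 - p) := by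
    rw [hσψp, MeasureTheory.integral_mul_const, ← hψ]
  set I1 := ∫ ω, e (X ω) * s₁ (X ω) ∂P with hI1d
  set I2 := ∫ ω, e (X ω) ^ 2 * s₀ (X ω) / (1 - e (X ω)) ∂P with hI2d
  set I3 := ∫ ω, β (X ω) ^ 2 * e (X ω) ∂P with hI3d
  have hS1 : Integrable (fun ω => e (X ω) * s₁ (X ω) +
      e (X ω) ^ 2 * s₀ (X ω) / (1 - e (X ω))) P := hI1.add hI2
  have hS2 : Integrable (fun ω => e (X ω) * s₁ (X ω) +
      e (X ω) ^ 2 * s₀ (X ω) / (1 - e (X ω)) + β (X ω) ^ 2 * e (X ω)) P := hS1.add hI3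
  have hI4' : Integrable (fun ω => (-(2 * τ)) * (β (X ω) * e (X ω))) P := hI4.const_mul _
  have hS3 : Integrable (fun ω => e (X ω) * s₁ (X ω) +
      e (X ω) ^ 2 * s₀ (X ω) / (1 - e (X ω)) + β (X ω) ^ 2 * e (X ω) +
      (-(2 * τ)) * (β (X ω) * e (X ω))) P := hS2.add hI4'
  have hI5' : Integrable (fun ω => (τ ^ 2) * e (X ω)) P := hIe.const_mul _
  have hσψ2' : σψ2 = I1 + I2 + I3 - ψ ^ 2 := by
    rw [hσψ2, integral_add hS1 hI3, integral_add hI1 hI2]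
  have hcongr : (∫ ω, (e (X ω) * s₁ (X ω) / p ^ 2 +
      e (X ω) ^ 2 * s₀ (X ω) / (p ^ 2 * (1 - e (X ω))) +
      e (X ω) * (β (X ω) - τ) ^ 2 / p ^ 2) ∂P)
      = (p ^ 2)⁻¹ * ∫ ω, (e (X ω) * s₁ (X ω) +
        e (X ω) ^ 2 * s₀ (X ω) / (1 - e (X ω)) + β (X ω) ^ 2 * e (X ω) +
        (-(2 * τ)) * (β (X ω) * e (X ω)) + (τ ^ 2) * e (X ω)) ∂P := by
    rw [← MeasureTheory.integral_const_mul]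
    refine integral_congr_ae ?_
    filter_upwards [hebound] with ω h
    have hne : (1:ℝ) - e (X ω) ≠ 0 := by
      have : (0:ℝ) < 1 - e (X ω) := by nlinarith [hε₀.2]
      exact this.ne'
    exact att_pointwise_aux p τ (e (X ω)) (s₁ (X ω)) (s₀ (X ω)) (β (X ω)) (ne_of_gt hp0) hne
  have hbig : (∫ ω, (e (X ω) * s₁ (X ω) +
      e (X ω) ^ 2 * s₀ (X ω) / (1 - e (X ω)) + β (X ω) ^ 2 * e (X ω) +
      (-(2 * τ)) * (β (X ω) * e (X ω)) + (τ ^ 2) * e (X ω)) ∂P)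
      = I1 + I2 + I3 + (-(2 * τ)) * ψ + τ ^ 2 * p := by
    rw [integral_add hS3 hI5', integral_add hS2 hI4', integral_add hS1 hI3,
      integral_add hI1 hI2, MeasureTheory.integral_const_mul,
      MeasureTheory.integral_const_mul, ← hψ, ← hp]
  rw [hcongr, hbig, hV, hσψ2', hσp2, hσψp', hτ]
  exact att_algebra_aux p ψ I1 I2 I3 (ne_of_gt hp0)
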